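/- Let (a_n) be a strictly decreasing sequence of positive reals with a_n → 0 and a_{n+1}/a_n → 1. Then there exists a subsequence (a_{n_k}) such that a_{n_{k+1}}/a_{n_k} → 1 and a_{n_k} − a_{n_{k+1}} ≤ 2(a_{n_m} − a_{n_{m+1}}) for all k > m. -/

import Mathlib

open Filter

theorem stmt_1 (a : ℕ → ℝ) (hpos : ∀ n, 0 < a n) (hanti : StrictAnti a)
    (hlim : Tendsto a atTop (nhds 0))
    (hratio : Tendsto (fun n => a (n + 1) / a n) atTop (nhds 1)) :
    ∃ n : ℕ → ℕ, StrictMono n ∧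
      Tendsto (fun k => a (n (k + 1)) / a (n k)) atTop (nhds 1) ∧
      ∀ k m : ℕ, m < k → a (n k) - a (n (k + 1)) ≤ 2 * (a (n m) - a (n (m + 1))) := by
  classical
  -- The sup of step sizes from index `p` onward
  set S : ℕ → Set ℝ := fun p => (fun m => a m - a (m + 1)) '' Set.Ici p with hS
  have hSne : ∀ p, (S p).Nonempty := fun p => ⟨a p - a (p + 1), ⟨p, le_refl p, rfl⟩⟩
  have hSbdd : ∀ p, BddAbove (S p) := by
    intro p
    refine ⟨a p, ?_⟩
    rintro x ⟨m, hm, rfl⟩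
    show a m - a (m + 1) ≤ a p
    have h1 : a m ≤ a p := hanti.antitone hm
    have h2 := hpos (m + 1)
    linarith
  set s : ℕ → ℝ := fun p => sSup (S p) with hs
  have hs_mem : ∀ p m, p ≤ m → a m - a (m + 1) ≤ s p := fun p m hm =>
    le_csSup (hSbdd p) ⟨m, hm, rfl⟩
  have hs_pos : ∀ p, 0 < s p := by
    intro p
    have h1 : a (p + 1) < a p := hanti (Nat.lt_succ_self p)
    have := hs_mem p p le_rfl
    linarith
  have hs_lt : ∀ p, s p < a p := by
    intro p
    have hb : s p ≤ max (a p - a (p + 1)) (a (p + 1)) := by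
      apply csSup_le (hSne p)
      rintro x ⟨m, hm, rfl⟩
      show a m - a (m + 1) ≤ max (a p - a (p + 1)) (a (p + 1))
      rcases eq_or_lt_of_le (Set.mem_Ici.mp hm) with h | h
      · rw [← h]; exact le_max_left _ _
      · refine le_trans ?_ (le_max_right _ _)
        have h1 : a m ≤ a (p + 1) := hanti.antitone h
        have h2 := hpos (m + 1)
        linarith
    have h1 := hpos (p + 1)
    have h2 : a (p + 1) < a p := hanti (Nat.lt_succ_self p)
    rcases max_cases (a p - a (p + 1)) (a (p + 1)) with ⟨he, _⟩ | ⟨he, _⟩ <;>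
      rw [he] at hb <;> linarith
  have hs_anti : ∀ p q, p ≤ q → s q ≤ s p := by
    intro p q hpq
    apply csSup_le_csSup (hSbdd p) (hSne q)
    rintro x ⟨m, hm, rfl⟩
    exact ⟨m, le_trans hpq hm, rfl⟩
  -- s p is small compared to a p, eventually
  have hsmall : ∀ ε : ℝ, 0 < ε → ∃ M, ∀ p ≥ M, s p ≤ ε * a p := by
    intro ε hε
    have h1 : ∀ᶠ m in atTop, 1 - ε < a (m + 1) / a m :=
      hratio.eventually (eventually_gt_nhds (show (1 : ℝ) - ε < 1 by linarith))
    rcases eventually_atTop.1 h1 with ⟨M, hM⟩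
    refine ⟨M, fun p hp => ?_⟩
    apply csSup_le (hSne p)
    rintro x ⟨m, hm, rfl⟩
    show a m - a (m + 1) ≤ ε * a p
    have h2 := hM m (le_trans hp hm)
    have h3 : (1 - ε) * a m ≤ a (m + 1) := by
      rw [← le_div_iff₀ (hpos m)]
      exact h2.le
    have h4 : a m ≤ a p := hanti.antitone hm
    nlinarith
  -- existence of the next index
  have key : ∀ p : ℕ, ∃ m, p < m ∧ a m ≤ a p - s p := by
    intro p
    have hpos' : 0 < a p - s p := sub_pos.2 (hs_lt p)
    have h1 : ∀ᶠ m in atTop, a m < a p - s p :=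
      hlim.eventually (eventually_lt_nhds hpos')
    rcases (h1.and (eventually_gt_atTop p)).exists with ⟨m, h2, h3⟩
    exact ⟨m, h3, h2.le⟩
  -- definition of the subsequence
  set n : ℕ → ℕ := fun k => Nat.rec 0 (fun _ ih => Nat.find (key ih)) k with hn
  have hnsucc : ∀ k, n (k + 1) = Nat.find (key (n k)) := fun k => rfl
  have hstep : ∀ k, n k < n (k + 1) ∧ a (n (k + 1)) ≤ a (n k) - s (n k) := by
    intro k
    rw [hnsucc]
    exact Nat.find_spec (key (n k))
  have hmono : StrictMono n := strictMono_nat_of_lt_succ (fun k => (hstep k).1)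
  -- upper bound on the gaps
  have hupper : ∀ k, a (n k) - a (n (k + 1)) ≤ 2 * s (n k) := by
    intro k
    have h1 := (hstep k).1
    set p := n (k + 1) - 1 with hpdef
    have hp : p + 1 = n (k + 1) := Nat.succ_pred_eq_of_pos (lt_of_le_of_lt (Nat.zero_le _) h1)
    have hpk : n k ≤ p := by omega
    have hstep_p : a p - a (p + 1) ≤ s (n k) := hs_mem _ _ hpk
    have hlow : a (n k) - s (n k) < a p := by
      rcases eq_or_lt_of_le hpk with h | h
      · rw [← h]
        linarith [hs_pos (n k)]
      · have hplt : p < Nat.find (key (n k)) := by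
          rw [← hnsucc]; omega
        have hmin := Nat.find_min (key (n k)) hplt
        push_neg at hmin
        exact lt_of_not_ge (fun hc => absurd (hmin h) (not_lt.2 hc))
    calc a (n k) - a (n (k + 1)) = (a (n k) - a p) + (a p - a (p + 1)) := by rw [hp]; ring
      _ ≤ 2 * s (n k) := by linarith
  refine ⟨n, hmono, ?_, ?_⟩
  · -- ratio tends to 1
    rw [Metric.tendsto_atTop]
    intro ε hε
    obtain ⟨M, hM⟩ := hsmall (ε / 4) (by linarith)
    refine ⟨M, fun k hk => ?_⟩
    have hnk : M ≤ n k := le_trans hk hmono.le_apply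
    have hsM := hM (n k) hnk
    have h1 := hupper k
    have hA := hpos (n k)
    have hB := hpos (n (k + 1))
    have hlt : a (n (k + 1)) < a (n k) := hanti (hmono (Nat.lt_succ_self k))
    have hr1 : a (n (k + 1)) / a (n k) ≤ 1 := by
      rw [div_le_one hA]; exact hlt.le
    have hr2 : 1 - ε / 2 ≤ a (n (k + 1)) / a (n k) := by
      rw [le_div_iff₀ hA]
      nlinarith
    rw [Real.dist_eq, abs_lt]
    constructor <;> nlinarith
  · -- gap comparison
    intro k m hmk
    have h1 := hupper k
    have h2 := (hstep m).2
    have h3 : s (n k) ≤ s (n m) := hs_anti _ _ (hmono hmk).le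
    linarith
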